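/- Let D be an oriented graph, let P = v_0 v_1 ... v_m be an antidirected path in D of maximum length with v_0 v_1 ∈ E(D), and suppose for some index i with 2 ≤ i ≤ m that v_0 v_i ∈ E(D) and v_i v_{i-1} ∈ E(D). Then both the path P' = v_i v_{i+1} ... v_m v_{i-1} v_{i-2} ... v_1 v_0 (reading the vertices in this order) and the path P'' = v_i v_0 v_1 ... v_{i-1} v_m v_{m-1} ... v_{i+1} (or v_i v_0 v_1 ... v_{i-1} if i = m) are antidirected paths in D on the same vertex set as P. -/

import Mathlib

/-- Out-degree of `v` in the digraph given by the edge relation `D`. -/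
noncomputable def outDeg {V : Type*} (D : V → V → Prop) (v : V) : ℕ := {w | D v w}.ncard

/-- In-degree of `v` in the digraph given by the edge relation `D`. -/
noncomputable def inDeg {V : Type*} (D : V → V → Prop) (v : V) : ℕ := {w | D w v}.ncard

/-- `D` is an oriented graph: for each pair of vertices, at most one of the edges
`uv`, `vu` is present (in particular there are no loops). -/
def IsOriented {V : Type*} (D : V → V → Prop) : Prop := ∀ u v, D u v → ¬ D v u

/-- The number of (directed) edges of the digraph `D`. -/
noncomputable def edgeCount {V : Type*} (D : V → V → Prop) : ℕ := {p : V × V | D p.1 p.2}.ncard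

/-- The minimum pseudo-semidegree of `D` is at least `x`: `D` has an edge, and every
vertex has out-degree `0` or at least `x`, and in-degree `0` or at least `x`. -/
def PseudoGE {V : Type*} (D : V → V → Prop) (x : ℝ) : Prop :=
  (∃ u v, D u v) ∧
    ∀ v, (outDeg D v = 0 ∨ x ≤ (outDeg D v : ℝ)) ∧ (inDeg D v = 0 ∨ x ≤ (inDeg D v : ℝ))

/-- The minimum pseudo-semidegree of `D` is strictly greater than `x`. -/
def PseudoGT {V : Type*} (D : V → V → Prop) (x : ℝ) : Prop :=
  (∃ u v, D u v) ∧
    ∀ v, (outDeg D v = 0 ∨ x < (outDeg D v : ℝ)) ∧ (inDeg D v = 0 ∨ x < (inDeg D v : ℝ))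

/-- `f, g` describe an antidirected path `f 0, f 1, ..., f m` (of length `m`) in `D`:
`g i = true` iff the `i`-th edge is directed from `f i` towards `f (i+1)`, and consecutive
edges alternate in direction (equivalently, every vertex of the path has out-degree `0`
or in-degree `0` on the path). -/
def IsAntipath {V : Type*} (D : V → V → Prop) (m : ℕ) (f : ℕ → V) (g : ℕ → Bool) : Prop :=
  Set.InjOn f (Set.Iic m) ∧
  (∀ i < m, if g i then D (f i) (f (i + 1)) else D (f (i + 1)) (f i)) ∧
  (∀ i, i + 1 < m → g i ≠ g (i + 1))

/-- `D` contains each of the (at most two) antidirected paths of length `k`: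
for each initial direction `b` there is an antidirected path of length `k`
whose first edge has direction `b`. -/
def ContainsAllAntipaths {V : Type*} (D : V → V → Prop) (k : ℕ) : Prop :=
  ∀ b : Bool, ∃ f g, IsAntipath D k f g ∧ g 0 = b

/-- `f` describes an antidirected cycle of length `n` in `D`: the `i`-th edge joins
`f i` and `f (i+1)` and is directed from `f i` iff `g i = true`; every vertex `f i`
has out-degree `0` on the cycle (i.e. `g i = false ∧ g (i-1) = true`) or in-degree `0`
on the cycle (i.e. `g i = true ∧ g (i-1) = false`). -/
def IsAnticycle {V : Type*} (D : V → V → Prop) (n : ℕ) [NeZero n] (f : ZMod n → V) : Prop :=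
  3 ≤ n ∧ Function.Injective f ∧
  ∃ g : ZMod n → Bool,
    (∀ i, if g i then D (f i) (f (i + 1)) else D (f (i + 1)) (f i)) ∧
    (∀ i : ZMod n, (g i = false ∧ g (i - 1) = true) ∨ (g i = true ∧ g (i - 1) = false))

/-- Auxiliary: reindexing an antidirected path along a permutation of `{0,…,m}`. -/
theorem antipath_reindex {V : Type*} (D : V → V → Prop) (m : ℕ) (f : ℕ → V) (σ : ℕ → ℕ)
    (g' : ℕ → Bool)
    (hinj : Set.InjOn f (Set.Iic m))
    (hmap : ∀ j, j ≤ m → σ j ≤ m)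
    (hsinj : ∀ a b, a ≤ m → b ≤ m → σ a = σ b → a = b)
    (hssurj : ∀ t, t ≤ m → ∃ j, j ≤ m ∧ σ j = t)
    (hedge : ∀ j, j < m → if g' j then D (f (σ j)) (f (σ (j + 1))) else D (f (σ (j + 1))) (f (σ j)))
    (halt : ∀ j, j + 1 < m → g' j ≠ g' (j + 1)) :
    IsAntipath D m (f ∘ σ) g' ∧ (f ∘ σ) '' Set.Iic m = f '' Set.Iic m := by
  refine ⟨⟨?_, hedge, halt⟩, ?_⟩
  · intro a ha b hb hab
    exact hsinj a b ha hb (hinj (hmap a ha) (hmap b hb) hab)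
  · apply Set.Subset.antisymm
    · rintro x ⟨j, hj, rfl⟩
      exact ⟨σ j, hmap j hj, rfl⟩
    · rintro x ⟨t, ht, rfl⟩
      obtain ⟨j, hj, hjt⟩ := hssurj t ht
      exact ⟨j, hj, by simp [hjt]⟩


/-- Path-rerouting step from the proof of Lemma 1: if `P = v 0 … v m` is a maximum-length
antidirected path in an oriented graph `D` whose first edge is `v 0 → v 1` and whose last
edge is `v m → v (m-1)`, and `2 ≤ i ≤ m` is such that `v 0 → v i`, `v m → v (i-1)` and
`v i → v (i-1)` are edges of `D`, then both
`P' = v i, v (i+1), …, v m, v (i-1), v (i-2), …, v 0` and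
`P'' = v i, v 0, v 1, …, v (i-1), v m, v (m-1), …, v (i+1)` (which is
`v i, v 0, …, v (i-1)` when `i = m`) are antidirected paths in `D` on the same vertex
set as `P`. -/
theorem stmt_17 {V : Type*} [Fintype V] (D : V → V → Prop) (hor : IsOriented D)
    (m i : ℕ) (f : ℕ → V) (g : ℕ → Bool)
    (hP : IsAntipath D m f g)
    (hmax : ∀ m' f' g', IsAntipath D m' f' g' → m' ≤ m)
    (hfirst : g 0 = true) (hlast : g (m - 1) = false)
    (hi2 : 2 ≤ i) (him : i ≤ m)
    (e1 : D (f 0) (f i)) (e2 : D (f m) (f (i - 1))) (e3 : D (f i) (f (i - 1))) :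
    (∃ g', IsAntipath D m (fun j => if i + j ≤ m then f (i + j) else f (m - j)) g' ∧
      (fun j => if i + j ≤ m then f (i + j) else f (m - j)) '' Set.Iic m
        = f '' Set.Iic m) ∧
    (∃ g', IsAntipath D m
        (fun j => if j = 0 then f i else if j ≤ i then f (j - 1)
          else f (m + i + 1 - j)) g' ∧
      (fun j => if j = 0 then f i else if j ≤ i then f (j - 1)
          else f (m + i + 1 - j)) '' Set.Iic m = f '' Set.Iic m) := by
  obtain ⟨hinj, hedge, halt⟩ := hP
  have hg : ∀ j, j < m → g j = decide (j % 2 = 0) := by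
    intro j
    induction j with
    | zero => intro _; simpa using hfirst
    | succ k ih =>
      intro hj
      have hk := ih (by omega)
      have hne := halt k hj
      rw [hk] at hne
      cases hb : g (k + 1) <;> by_cases hp : k % 2 = 0 <;>
        simp [hp, hb] at hne ⊢ <;> omega
  have hm2 : 2 ≤ m := le_trans hi2 him
  have hme : m % 2 = 0 := by
    have h1 := hg (m - 1) (by omega)
    rw [hlast] at h1
    simp at h1
    omega
  have he : ∀ j, j < m → j % 2 = 0 → D (f j) (f (j + 1)) := by
    intro j hj hp
    have h := hedge j hj
    rw [hg j hj] at h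
    simpa [hp] using h
  have ho : ∀ j, j < m → j % 2 = 1 → D (f (j + 1)) (f j) := by
    intro j hj hp
    have h := hedge j hj
    rw [hg j hj] at h
    simpa [hp] using h
  have hie : i % 2 = 0 := by
    by_contra hodd
    have h := he (i - 1) (by omega) (by omega)
    rw [show i - 1 + 1 = i from by omega] at h
    exact hor _ _ e3 h
  constructor
  · -- Part 1
    have key1 : IsAntipath D m (f ∘ fun j => if i + j ≤ m then i + j else m - j)
        (fun j => decide (j % 2 = 0)) ∧
        (f ∘ fun j => if i + j ≤ m then i + j else m - j) '' Set.Iic m = f '' Set.Iic m := by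
      refine antipath_reindex D m f _ _ hinj ?_ ?_ ?_ ?_ ?_
      · intro j hj; (try dsimp only); split <;> omega
      · intro a b ha hb hab
        try dsimp only at hab
        split at hab <;> split at hab <;> omega
      · intro t ht
        by_cases h : i ≤ t
        · refine ⟨t - i, by omega, ?_⟩
          simp only [show i + (t - i) ≤ m from by omega, if_true]
          omega
        · refine ⟨m - t, by omega, ?_⟩
          simp only [show ¬ (i + (m - t) ≤ m) from by omega, if_false]
          omega
      · intro j hj
        try dsimp only
        by_cases hA : i + j + 1 ≤ m
        · simp only [show i + j ≤ m from by omega, show i + (j + 1) ≤ m from by omega, if_true]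
          by_cases hp : j % 2 = 0
          · have h := he (i + j) (by omega) (by omega)
            rw [show i + j + 1 = i + (j + 1) from by omega] at h
            simpa [hp] using h
          · have h := ho (i + j) (by omega) (by omega)
            rw [show i + j + 1 = i + (j + 1) from by omega] at h
            simpa [hp] using h
        · by_cases hB : i + j ≤ m
          · simp only [hB, if_true, show ¬ (i + (j + 1) ≤ m) from by omega, if_false]
            rw [show i + j = m from by omega, show m - (j + 1) = i - 1 from by omega]
            simpa [show j % 2 = 0 from by omega] using e2
          · simp only [show ¬ (i + j ≤ m) from hB, show ¬ (i + (j + 1) ≤ m) from by omega,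
              if_false]
            rw [show m - (j + 1) = m - j - 1 from by omega]
            by_cases hp : j % 2 = 0
            · have h := ho (m - j - 1) (by omega) (by omega)
              rw [show m - j - 1 + 1 = m - j from by omega] at h
              simpa [hp] using h
            · have h := he (m - j - 1) (by omega) (by omega)
              rw [show m - j - 1 + 1 = m - j from by omega] at h
              simpa [hp] using h
      · intro j _
        simp only [ne_eq, decide_eq_decide]
        omega
    have hfun1 : (fun j => if i + j ≤ m then f (i + j) else f (m - j)) =
        (f ∘ fun j => if i + j ≤ m then i + j else m - j) := by
      funext j
      simp only [Function.comp]
      split <;> rfl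
    exact ⟨fun j => decide (j % 2 = 0), by rw [hfun1]; exact key1⟩
  · -- Part 2
    have key2 : IsAntipath D m
        (f ∘ fun j => if j = 0 then i else if j ≤ i then j - 1 else m + i + 1 - j)
        (fun j => decide (j % 2 = 1)) ∧
        (f ∘ fun j => if j = 0 then i else if j ≤ i then j - 1 else m + i + 1 - j) '' Set.Iic m
          = f '' Set.Iic m := by
      refine antipath_reindex D m f _ _ hinj ?_ ?_ ?_ ?_ ?_
      · intro j hj; (try dsimp only); split
        · omega
        · split <;> omega
      · intro a b ha hb hab
        rcases eq_or_ne a 0 with ha0 | ha0 <;> rcases eq_or_ne b 0 with hb0 | hb0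
        · omega
        · rw [if_pos ha0, if_neg hb0] at hab
          split at hab <;> omega
        · rw [if_neg ha0, if_pos hb0] at hab
          split at hab <;> omega
        · rw [if_neg ha0, if_neg hb0] at hab
          split at hab <;> split at hab <;> omega
      · intro t ht
        by_cases h1 : t = i
        · exact ⟨0, by omega, by simp [h1]⟩
        · by_cases h2 : t < i
          · refine ⟨t + 1, by omega, ?_⟩
            simp only [show ¬ (t + 1 = 0) from by omega, if_false,
              show t + 1 ≤ i from by omega, if_true]
            omega
          · refine ⟨m + i + 1 - t, by omega, ?_⟩
            simp only [show ¬ (m + i + 1 - t = 0) from by omega, if_false,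
              show ¬ (m + i + 1 - t ≤ i) from by omega]
            omega
      · intro j hj
        try dsimp only
        by_cases hj0 : j = 0
        · subst hj0
          simp only [if_true, show (0:ℕ) + 1 = 1 from rfl, show ¬ ((1:ℕ) = 0) from by omega,
            if_false, show (1:ℕ) ≤ i from by omega, if_pos rfl]
          simpa using e1
        · by_cases hji : j < i
          · simp only [hj0, if_false, show j ≤ i from by omega, if_true,
              show ¬ (j + 1 = 0) from by omega, show j + 1 ≤ i from by omega,
              Nat.add_sub_cancel]
            by_cases hp : j % 2 = 1
            · have h := he (j - 1) (by omega) (by omega)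
              rw [show j - 1 + 1 = j from by omega] at h
              simpa [hp] using h
            · have h := ho (j - 1) (by omega) (by omega)
              rw [show j - 1 + 1 = j from by omega] at h
              simpa [hp] using h
          · by_cases hjei : j = i
            · subst hjei
              simp only [hj0, if_false, le_refl, if_true, show ¬ (j + 1 = 0) from by omega,
                show ¬ (j + 1 ≤ j) from by omega]
              rw [show m + j + 1 - (j + 1) = m from by omega]
              simpa [show ¬ (j % 2 = 1) from by omega] using e2
            · simp only [hj0, if_false, show ¬ (j ≤ i) from by omega,
                show ¬ (j + 1 = 0) from by omega, show ¬ (j + 1 ≤ i) from by omega]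
              rw [show m + i + 1 - (j + 1) = m + i - j from by omega]
              by_cases hp : j % 2 = 1
              · have h := ho (m + i - j) (by omega) (by omega)
                rw [show m + i - j + 1 = m + i + 1 - j from by omega] at h
                simpa [hp] using h
              · have h := he (m + i - j) (by omega) (by omega)
                rw [show m + i - j + 1 = m + i + 1 - j from by omega] at h
                simpa [hp] using h
      · intro j _
        simp only [ne_eq, decide_eq_decide]
        omega
    have hfun2 : (fun j => if j = 0 then f i else if j ≤ i then f (j - 1)
        else f (m + i + 1 - j)) =
        (f ∘ fun j => if j = 0 then i else if j ≤ i then j - 1 else m + i + 1 - j) := by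
      funext j
      simp only [Function.comp]
      split
      · rfl
      · split <;> rfl
    exact ⟨fun j => decide (j % 2 = 1), by rw [hfun2]; exact key2⟩
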